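/- For every β > 1 and every h ∈ ℕ with h < β, the space C_b^h(X) belongs to the class J_{h/β} between C_b(X) and C_b^β(X); that is, there exists C > 0 such that ‖f‖_{C_b^h(X)} ≤ C · ‖f‖_{C_b^β(X)}^{h/β} · ‖f‖_∞^{1−h/β} for all f ∈ C_b^β(X). -/

import Mathlib

open Real Set

lemma landau_aux {X E : Type*} [NormedAddCommGroup X] [NormedSpace ℝ X]
    [NormedAddCommGroup E] [NormedSpace ℝ E]
    (F : X → E) (hF : Differentiable ℝ F) {M K γ τ : ℝ}
    (hγ0 : 0 < γ) (hγ1 : γ ≤ 1) (hτ : 0 < τ) (hK : 0 ≤ K)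
    (hM : ∀ z, ‖F z‖ ≤ M)
    (hHol : ∀ z w, ‖fderiv ℝ F z - fderiv ℝ F w‖ ≤ K * ‖z - w‖ ^ γ) (x : X) :
    ‖fderiv ℝ F x‖ * τ ≤ 2 * M + K * τ ^ γ * τ := by
  set A := fderiv ℝ F x with hA
  have hM0 : 0 ≤ M := le_trans (norm_nonneg _) (hM x)
  have hτγ : 0 ≤ K * τ ^ γ := mul_nonneg hK (rpow_nonneg hτ.le _)
  have core : ∀ y : X, ‖y‖ ≤ τ → ‖A y‖ ≤ 2 * M + K * τ ^ γ * τ := by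
    intro y hy
    have hdiff : ∀ z ∈ Metric.closedBall x τ, DifferentiableAt ℝ (fun w => F w - A w) z :=
      fun z _ => (hF z).sub A.differentiable.differentiableAt
    have hbound : ∀ z ∈ Metric.closedBall x τ,
        ‖fderiv ℝ (fun w => F w - A w) z‖ ≤ K * τ ^ γ := by
      intro z hz
      have hz' : ‖z - x‖ ≤ τ := by
        rw [← dist_eq_norm]; exact Metric.mem_closedBall.mp hz
      have e : fderiv ℝ (fun w => F w - A w) z = fderiv ℝ F z - A := by
        rw [fderiv_fun_sub (hF z) A.differentiable.differentiableAt, A.fderiv]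
      rw [e]
      refine (hHol z x).trans ?_
      exact mul_le_mul_of_nonneg_left (Real.rpow_le_rpow (norm_nonneg _) hz' hγ0.le) hK
    have hx1 : x ∈ Metric.closedBall x τ := Metric.mem_closedBall_self hτ.le
    have hx2 : x + y ∈ Metric.closedBall x τ := by
      rw [Metric.mem_closedBall, dist_eq_norm, add_sub_cancel_left]; exact hy
    have mv := (convex_closedBall x τ).norm_image_sub_le_of_norm_fderiv_le hdiff hbound hx1 hx2
    have hAy : A (x + y) - A x = A y := by rw [← map_sub]; congr 1; abel
    have hdec : A y = (F (x + y) - F x) - ((F (x + y) - A (x + y)) - (F x - A x)) := by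
      rw [show (F (x + y) - A (x + y)) - (F x - A x)
          = (F (x + y) - F x) - (A (x + y) - A x) by abel, hAy]
      abel
    have h1 : ‖A y‖ ≤ ‖F (x + y) - F x‖ + K * τ ^ γ * ‖x + y - x‖ := by
      rw [hdec]
      exact le_trans (norm_sub_le _ _) (add_le_add le_rfl mv)
    have h2 : ‖F (x + y) - F x‖ ≤ 2 * M :=
      le_trans (norm_sub_le _ _) (by linarith [hM (x + y), hM x])
    have h3 : ‖x + y - x‖ ≤ τ := by rw [add_sub_cancel_left]; exact hy
    calc ‖A y‖ ≤ ‖F (x + y) - F x‖ + K * τ ^ γ * ‖x + y - x‖ := h1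
      _ ≤ 2 * M + K * τ ^ γ * τ := by gcongr
  have hub : ‖A‖ ≤ (2 * M + K * τ ^ γ * τ) / τ := by
    refine A.opNorm_le_bound (by positivity) fun v => ?_
    rcases eq_or_ne v 0 with rfl | hv
    · simp
    · have hv0 : 0 < ‖v‖ := norm_pos_iff.mpr hv
      have hy : ‖(τ / ‖v‖) • v‖ = τ := by
        rw [norm_smul, Real.norm_eq_abs, abs_div, abs_of_pos hτ, abs_of_pos hv0,
          div_mul_cancel₀ _ hv0.ne']
      have hc := core _ hy.le
      rw [map_smul, norm_smul, Real.norm_eq_abs, abs_div, abs_of_pos hτ, abs_of_pos hv0] at hc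
      have h2 := mul_le_mul_of_nonneg_right hc (div_nonneg hv0.le hτ.le)
      have h3 : τ / ‖v‖ * ‖A v‖ * (‖v‖ / τ) = ‖A v‖ := by field_simp
      rw [h3] at h2
      calc ‖A v‖ ≤ (2 * M + K * τ ^ γ * τ) * (‖v‖ / τ) := h2
        _ = (2 * M + K * τ ^ γ * τ) / τ * ‖v‖ := by ring
  calc ‖A‖ * τ ≤ (2 * M + K * τ ^ γ * τ) / τ * τ := by gcongr
    _ = 2 * M + K * τ ^ γ * τ := by field_simp

set_option maxHeartbeats 1000000 in
lemma comb_aux (k' : ℕ) (σ M B lam : ℝ) (hσ0 : 0 < σ) (hσ1 : σ ≤ 1)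
    (hM : 0 ≤ M) (hB : 0 ≤ B) (hlam : 0 < lam) (m : ℕ → ℝ)
    (hm0 : m 0 ≤ M) (hmnn : ∀ j, j ≤ k' + 1 → 0 ≤ m j)
    (key1 : ∀ i, i + 2 ≤ k' + 1 → ∀ τ, 0 < τ → m (i+1) * τ ≤ 2 * m i + m (i+2) * (τ * τ))
    (key2 : ∀ τ, 0 < τ → m (k'+1) * τ ≤ 2 * m k' + B * τ ^ σ * τ) :
    ∀ j, j ≤ k' + 1 → m j * lam ^ j ≤
      8 ^ ((k'+2)*(k'+2)) * (M + B * lam ^ σ * lam ^ (k'+1)) := by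
  set g : ℕ → ℝ := fun j => m j * lam ^ j * 8 ^ (j*j) with hg
  obtain ⟨j₀, hj₀, hmax⟩ := Finset.exists_max_image (Finset.range (k'+2)) g ⟨0, by simp⟩
  have hmax' : ∀ j, j ≤ k' + 1 → g j ≤ g j₀ := fun j hj =>
    hmax j (Finset.mem_range.mpr (by omega))
  have hGnn : 0 ≤ g j₀ := le_trans (by
    have := hmnn 0 (by omega); simp [hg]; positivity) (hmax' 0 (by omega))
  have hZ : 0 ≤ B * lam ^ σ * lam ^ (k'+1) := by positivity
  have hC1 : (1:ℝ) ≤ 8 ^ ((k'+2)*(k'+2)) := one_le_pow₀ (by norm_num)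
  have hj₀' : j₀ ≤ k' + 1 := by
    have := Finset.mem_range.mp hj₀; omega
  have hGb : g j₀ ≤ 8 ^ ((k'+2)*(k'+2)) * (M + B * lam ^ σ * lam ^ (k'+1)) := by
    rcases Nat.eq_zero_or_pos j₀ with h0 | hpos
    · have hG0 : g j₀ = m 0 := by simp [hg, h0]
      rw [hG0]
      nlinarith [hm0, hM, hZ, hC1]
    rcases eq_or_lt_of_le hj₀' with htop | hint
    · -- top case j₀ = k'+1
      subst htop
      set r : ℝ := 8 ^ k' with hr
      set w : ℝ := 8 ^ (k'*k') with hw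
      set L : ℝ := lam ^ k' with hL
      have hrp : 0 < r := by rw [hr]; positivity
      have hwp : 0 < w := by rw [hw]; positivity
      have hLp : 0 < L := by rw [hL]; positivity
      have e1 : lam ^ (k'+1) = L * lam := by rw [hL, pow_succ]
      have e2 : (8:ℝ) ^ ((k'+1)*(k'+1)) = w * (r*r) * 8 := by
        rw [hw, hr, ← pow_add, ← pow_add, ← pow_succ]
        congr 1; ring
      have e3 : (8:ℝ) ^ ((k'+2)*(k'+2)) = w * (r*r*r*r) * 4096 := by
        rw [hw, hr, show (4096:ℝ) = 8^4 by norm_num, ← pow_add, ← pow_add, ← pow_add, ← pow_add]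
        congr 1; ring
      have hτp : (0:ℝ) < 32 * (r*r) * lam := by positivity
      have hr1 : (1:ℝ) ≤ r := by rw [hr]; exact one_le_pow₀ (by norm_num)
      have hs1 : (1:ℝ) ≤ 32 * (r*r) := by nlinarith [hr1]
      have hτσ : (32 * (r*r) * lam) ^ σ ≤ 32 * (r*r) * lam ^ σ := by
        rw [Real.mul_rpow (by positivity) hlam.le]
        have : (32 * (r*r)) ^ σ ≤ 32 * (r*r) := by
          calc (32 * (r*r)) ^ σ ≤ (32 * (r*r)) ^ (1:ℝ) :=
                Real.rpow_le_rpow_of_exponent_le hs1 hσ1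
            _ = 32 * (r*r) := Real.rpow_one _
        exact mul_le_mul_of_nonneg_right this (Real.rpow_nonneg hlam.le _)
      have h1 := key2 (32 * (r*r) * lam) hτp
      have h1' : m (k'+1) * (32 * (r*r) * lam) ≤
          2 * m k' + B * (32 * (r*r) * lam ^ σ) * (32 * (r*r) * lam) := by
        refine h1.trans ?_
        have : B * (32 * (r*r) * lam) ^ σ * (32 * (r*r) * lam) ≤
            B * (32 * (r*r) * lam ^ σ) * (32 * (r*r) * lam) := by
          exact mul_le_mul_of_nonneg_right (mul_le_mul_of_nonneg_left hτσ hB) hτp.le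
        linarith
      have hgk : m k' * L * w ≤ g (k'+1) := by
        have := hmax' k' (by omega)
        simp only [hg] at this
        rw [← hL, ← hw] at this
        exact this
      have hGeq : g (k'+1) = m (k'+1) * (L * lam) * (w * (r*r) * 8) := by
        simp only [hg]
        rw [e1, e2]
      have h2 := mul_le_mul_of_nonneg_right h1' (by positivity : (0:ℝ) ≤ L * w / 4)
      rw [hGeq] at hgk ⊢
      rw [e3, e1]
      have hmk : 0 ≤ m k' := hmnn _ (by omega)
      have hMt : 0 ≤ w * (r*r*r*r) * 4096 * M := by positivity
      have hXt : 0 ≤ w * (r*r*r*r) * (B * lam ^ σ * (L * lam)) := by positivity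
      nlinarith [h2, hgk, hMt, hXt]
    · -- interior case
      obtain ⟨i, rfl⟩ : ∃ i, j₀ = i + 1 := ⟨j₀ - 1, by omega⟩
      have hik : i + 2 ≤ k' + 1 := by omega
      set q : ℝ := 8 ^ i with hq
      set p : ℝ := 8 ^ (i*i) with hp
      set L : ℝ := lam ^ i with hL
      have hqp : 0 < q := by rw [hq]; positivity
      have hpp : 0 < p := by rw [hp]; positivity
      have hLp : 0 < L := by rw [hL]; positivity
      have e1 : lam ^ (i+1) = L * lam := by rw [hL, pow_succ]
      have e2 : lam ^ (i+2) = L * lam * lam := by rw [hL, pow_succ, pow_succ]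
      have e3 : (8:ℝ) ^ ((i+1)*(i+1)) = p * (q*q) * 8 := by
        rw [hp, hq, ← pow_add, ← pow_add, ← pow_succ]; congr 1; ring
      have e4 : (8:ℝ) ^ ((i+2)*(i+2)) = p * (q*q*q*q) * 4096 := by
        rw [hp, hq, show (4096:ℝ) = 8^4 by norm_num,
          ← pow_add, ← pow_add, ← pow_add, ← pow_add]
        congr 1; ring
      have hτp : (0:ℝ) < 128 * (q*q) * lam := by positivity
      have h1 := key1 i hik (128 * (q*q) * lam) hτp
      have hgi : m i * L * p ≤ g (i+1) := by
        have := hmax' i (by omega)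
        simp only [hg] at this
        rw [← hL, ← hp] at this
        exact this
      have hgi2 : m (i+2) * (L * lam * lam) * (p * (q*q*q*q) * 4096) ≤ g (i+1) := by
        have := hmax' (i+2) (by omega)
        simp only [hg] at this
        rw [e2, e4] at this
        exact this
      have hGeq : g (i+1) = m (i+1) * (L * lam) * (p * (q*q) * 8) := by
        simp only [hg]; rw [e1, e3]
      have hG0 : g (i+1) ≤ 0 := by
        have h2 := mul_le_mul_of_nonneg_right h1 (by positivity : (0:ℝ) ≤ L * p / 16)
        rw [hGeq] at hgi hgi2 ⊢
        nlinarith [h2, hgi, hgi2]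
      refine hG0.trans (by positivity)
  intro j hj
  have h1 : m j * lam ^ j ≤ g j := by
    have hmj : 0 ≤ m j * lam ^ j := mul_nonneg (hmnn j hj) (by positivity)
    have h8 : (1:ℝ) ≤ 8 ^ (j*j) := one_le_pow₀ (by norm_num)
    calc m j * lam ^ j = m j * lam ^ j * 1 := by ring
      _ ≤ m j * lam ^ j * 8 ^ (j*j) := by gcongr
      _ = g j := rfl
  exact h1.trans ((hmax' j hj).trans hGb)

set_option maxHeartbeats 1600000 in
/-- For β > 1 (β = k + σ, σ ∈ (0,1]) and h ∈ ℕ with h < β, C_b^h(X) belongs to the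
class J_{h/β} between C_b(X) and C_b^β(X):
‖f‖_{C_b^h} ≤ C ‖f‖_{C_b^β}^{h/β} ‖f‖_∞^{1-h/β}. -/
theorem stmt4 (β σ : ℝ) (k : ℕ) (hσ : σ ∈ Set.Ioc (0:ℝ) 1) (hβ : β = (k:ℝ) + σ)
    (hβ1 : 1 < β) :
    ∃ C : ℝ, 0 < C ∧
      ∀ h : ℕ, (h:ℝ) < β →
      ∀ (X : Type) [NormedAddCommGroup X] [NormedSpace ℝ X]
        (f : X → ℝ) (Mf B : ℝ),
        ContDiff ℝ k f →
        (∀ x, |f x| ≤ Mf) →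
        (∀ x, |f x| + ∑ j ∈ Finset.Icc 1 k, ‖iteratedFDeriv ℝ j f x‖ ≤ B) →
        (∀ x y, ‖iteratedFDeriv ℝ k f x - iteratedFDeriv ℝ k f y‖ ≤ B * ‖x - y‖ ^ σ) →
        ∀ x, |f x| + ∑ j ∈ Finset.Icc 1 h, ‖iteratedFDeriv ℝ j f x‖ ≤
          C * B ^ ((h:ℝ)/β) * Mf ^ (1 - (h:ℝ)/β) := by
  obtain ⟨hσ0, hσ1⟩ := hσ
  have hβpos : (0:ℝ) < β := lt_trans one_pos hβ1
  rcases Nat.eq_zero_or_pos k with rfl | hk1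
  · exact absurd hβ1 (by rw [hβ]; push_cast; linarith)
  obtain ⟨k', rfl⟩ : ∃ k', k = k' + 1 := ⟨k - 1, by omega⟩
  have hCk1 : (1:ℝ) ≤ 8 ^ ((k'+2)*(k'+2)) := one_le_pow₀ (by norm_num)
  refine ⟨1 + 2 * ((k':ℝ) + 2) * 8 ^ ((k'+2)*(k'+2)), by positivity, ?_⟩
  intro h hh X _ _ f Mf B hCd hMf hB hHol x
  haveI : Nonempty X := ⟨0⟩
  set Ck : ℝ := 8 ^ ((k'+2)*(k'+2)) with hCkdef
  set C : ℝ := 1 + 2 * ((k':ℝ) + 2) * Ck with hCdef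
  have hC1 : (1:ℝ) ≤ C := by nlinarith [hCk1]
  have hC0 : (0:ℝ) < C := lt_of_lt_of_le one_pos hC1
  have hMf0 : 0 ≤ Mf := le_trans (abs_nonneg _) (hMf x)
  have hB0 : 0 ≤ B := by
    refine le_trans ?_ (hB x)
    positivity
  have hθ0 : 0 ≤ (h:ℝ)/β := by positivity
  have hθ1 : (h:ℝ)/β < 1 := (div_lt_one hβpos).mpr hh
  have hhk : h ≤ k' + 1 := by
    have h1 : (h:ℝ) < ((k':ℝ)+1) + 1 := by
      rw [hβ] at hh; push_cast at hh ⊢; linarith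
    have h2 : (h:ℝ) < ((k'+2:ℕ):ℝ) := by push_cast; linarith
    have h3 : h < k' + 2 := by exact_mod_cast h2
    omega
  have hpt : ∀ j, j ≤ k' + 1 → ∀ y, ‖iteratedFDeriv ℝ j f y‖ ≤ B := by
    intro j hj y
    rcases Nat.eq_zero_or_pos j with rfl | hj1
    · rw [norm_iteratedFDeriv_zero, Real.norm_eq_abs]
      refine le_trans ?_ (hB y)
      have h0 : (0:ℝ) ≤ ∑ i ∈ Finset.Icc 1 (k'+1), ‖iteratedFDeriv ℝ i f y‖ :=
        Finset.sum_nonneg fun _ _ => norm_nonneg _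
      linarith
    · refine le_trans ?_ (hB y)
      have h1 : ‖iteratedFDeriv ℝ j f y‖ ≤ ∑ i ∈ Finset.Icc 1 (k'+1), ‖iteratedFDeriv ℝ i f y‖ :=
        Finset.single_le_sum (f := fun i => ‖iteratedFDeriv ℝ i f y‖)
          (fun i _ => norm_nonneg _) (Finset.mem_Icc.mpr ⟨hj1, hj⟩)
      have h2 : (0:ℝ) ≤ |f y| := abs_nonneg _
      linarith
  rcases le_or_gt B Mf with hBM | hMB
  · -- easy case B ≤ Mf
    have hL : |f x| + ∑ j ∈ Finset.Icc 1 h, ‖iteratedFDeriv ℝ j f x‖ ≤ B := by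
      refine le_trans ?_ (hB x)
      have := Finset.sum_le_sum_of_subset_of_nonneg
        (Finset.Icc_subset_Icc_right (a := 1) hhk) (fun i _ _ => norm_nonneg (iteratedFDeriv ℝ i f x))
      linarith
    refine hL.trans ?_
    rcases eq_or_lt_of_le hB0 with hB00 | hBpos
    · rw [← hB00]
      have : (0:ℝ) ≤ C * (0:ℝ) ^ ((h:ℝ)/β) * Mf ^ (1 - (h:ℝ)/β) :=
        mul_nonneg (mul_nonneg hC0.le (Real.rpow_nonneg le_rfl _)) (Real.rpow_nonneg hMf0 _)
      linarith
    · have e : B = B ^ ((h:ℝ)/β) * B ^ (1 - (h:ℝ)/β) := by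
        rw [← Real.rpow_add hBpos]; norm_num
      have h2 : B ^ (1 - (h:ℝ)/β) ≤ Mf ^ (1 - (h:ℝ)/β) :=
        Real.rpow_le_rpow hB0 hBM (by linarith)
      calc B = B ^ ((h:ℝ)/β) * B ^ (1 - (h:ℝ)/β) := e
        _ ≤ B ^ ((h:ℝ)/β) * Mf ^ (1 - (h:ℝ)/β) :=
            mul_le_mul_of_nonneg_left h2 (Real.rpow_nonneg hB0 _)
        _ = 1 * (B ^ ((h:ℝ)/β) * Mf ^ (1 - (h:ℝ)/β)) := by ring
        _ ≤ C * (B ^ ((h:ℝ)/β) * Mf ^ (1 - (h:ℝ)/β)) := by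
            refine mul_le_mul_of_nonneg_right hC1 ?_
            exact mul_nonneg (Real.rpow_nonneg hB0 _) (Real.rpow_nonneg hMf0 _)
        _ = C * B ^ ((h:ℝ)/β) * Mf ^ (1 - (h:ℝ)/β) := by ring
  rcases eq_or_lt_of_le hMf0 with hM0 | hMfpos
  · -- Mf = 0, f ≡ 0
    have hfz : f = fun _ => (0:ℝ) := funext fun y => abs_nonpos_iff.mp (hM0 ▸ hMf y)
    rw [hfz]
    simp only [iteratedFDeriv_zero_fun, Pi.zero_apply, norm_zero, abs_zero,
      Finset.sum_const_zero, add_zero]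
    exact mul_nonneg (mul_nonneg hC0.le (Real.rpow_nonneg hB0 _)) (Real.rpow_nonneg hMf0 _)
  · -- main case 0 < Mf < B
    have hBpos : 0 < B := hMfpos.trans hMB
    set m : ℕ → ℝ := fun j => ⨆ y, ‖iteratedFDeriv ℝ j f y‖ with hm
    have hbdd : ∀ j, j ≤ k'+1 → BddAbove (Set.range fun y : X => ‖iteratedFDeriv ℝ j f y‖) :=
      fun j hj => ⟨B, by rintro _ ⟨y, rfl⟩; exact hpt j hj y⟩
    have hle : ∀ j, j ≤ k'+1 → ∀ y, ‖iteratedFDeriv ℝ j f y‖ ≤ m j :=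
      fun j hj y => le_ciSup (hbdd j hj) y
    have hmnn : ∀ j, j ≤ k'+1 → 0 ≤ m j :=
      fun j hj => le_trans (norm_nonneg _) (hle j hj 0)
    have hm0 : m 0 ≤ Mf := ciSup_le fun y => by
      rw [norm_iteratedFDeriv_zero, Real.norm_eq_abs]; exact hMf y
    have hdiff : ∀ i, i ≤ k' → Differentiable ℝ (iteratedFDeriv ℝ i f) := fun i hi =>
      hCd.differentiable_iteratedFDeriv (by exact_mod_cast Nat.lt_succ_of_le hi)
    have hdn : ∀ (n : ℕ) (y z : X),
        ‖fderiv ℝ (iteratedFDeriv ℝ n f) y - fderiv ℝ (iteratedFDeriv ℝ n f) z‖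
          = ‖iteratedFDeriv ℝ (n+1) f y - iteratedFDeriv ℝ (n+1) f z‖ := by
      intro n y z
      rw [fderiv_iteratedFDeriv, Function.comp_apply, Function.comp_apply,
        ← LinearIsometryEquiv.map_sub, LinearIsometryEquiv.norm_map]
    have key1 : ∀ i, i + 2 ≤ k' + 1 → ∀ τ, 0 < τ →
        m (i+1) * τ ≤ 2 * m i + m (i+2) * (τ * τ) := by
      intro i hi τ hτ
      have hLip : ∀ y z : X, ‖fderiv ℝ (iteratedFDeriv ℝ i f) y
          - fderiv ℝ (iteratedFDeriv ℝ i f) z‖ ≤ m (i+2) * ‖y - z‖ ^ (1:ℝ) := by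
        intro y z
        rw [hdn, Real.rpow_one]
        exact convex_univ.norm_image_sub_le_of_norm_fderiv_le
          (fun w _ => hdiff (i+1) (by omega) w)
          (fun w _ => by
            rw [norm_fderiv_iteratedFDeriv]; exact hle (i+2) (by omega) w)
          (Set.mem_univ z) (Set.mem_univ y)
      have hla := landau_aux (iteratedFDeriv ℝ i f) (hdiff i (by omega))
        one_pos le_rfl hτ (hmnn (i+2) (by omega)) (hle i (by omega)) hLip
      have hub : ∀ y, ‖iteratedFDeriv ℝ (i+1) f y‖ ≤ (2 * m i + m (i+2) * (τ*τ))/τ := by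
        intro y
        rw [← norm_fderiv_iteratedFDeriv, le_div_iff₀ hτ]
        have := hla y
        rw [Real.rpow_one] at this
        nlinarith [this]
      have h2 : m (i+1) ≤ (2 * m i + m (i+2) * (τ*τ))/τ := ciSup_le hub
      calc m (i+1) * τ ≤ ((2 * m i + m (i+2) * (τ*τ))/τ) * τ :=
            mul_le_mul_of_nonneg_right h2 hτ.le
        _ = 2 * m i + m (i+2) * (τ*τ) := by field_simp
    have key2 : ∀ τ, 0 < τ → m (k'+1) * τ ≤ 2 * m k' + B * τ ^ σ * τ := by
      intro τ hτ
      have hHol' : ∀ y z : X, ‖fderiv ℝ (iteratedFDeriv ℝ k' f) y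
          - fderiv ℝ (iteratedFDeriv ℝ k' f) z‖ ≤ B * ‖y - z‖ ^ σ := by
        intro y z
        rw [hdn]
        exact hHol y z
      have hla := landau_aux (iteratedFDeriv ℝ k' f) (hdiff k' le_rfl)
        hσ0 hσ1 hτ hB0 (hle k' (by omega)) hHol'
      have hub : ∀ y, ‖iteratedFDeriv ℝ (k'+1) f y‖ ≤ (2 * m k' + B * τ ^ σ * τ)/τ := by
        intro y
        rw [← norm_fderiv_iteratedFDeriv, le_div_iff₀ hτ]
        exact hla y
      have h2 : m (k'+1) ≤ (2 * m k' + B * τ ^ σ * τ)/τ := ciSup_le hub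
      calc m (k'+1) * τ ≤ ((2 * m k' + B * τ ^ σ * τ)/τ) * τ :=
            mul_le_mul_of_nonneg_right h2 hτ.le
        _ = 2 * m k' + B * τ ^ σ * τ := by field_simp
    have hMfB : 0 < Mf/B := div_pos hMfpos hBpos
    set lam : ℝ := (Mf/B) ^ (1/β) with hlamdef
    have hlamp : 0 < lam := Real.rpow_pos_of_pos hMfB _
    have master := comb_aux k' σ Mf B lam hσ0 hσ1 hMf0 hB0 hlamp m hm0 hmnn key1 key2
    have hlamβ : B * lam ^ σ * lam ^ (k'+1) = Mf := by
      have e1 : lam ^ σ * lam ^ (k'+1) = Mf/B := by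
        rw [← Real.rpow_natCast lam (k'+1), ← Real.rpow_add hlamp, hlamdef,
          ← Real.rpow_mul hMfB.le]
        rw [show (1/β) * (σ + ((k'+1:ℕ):ℝ)) = 1 by
          rw [hβ]; push_cast; field_simp; ring, Real.rpow_one]
      rw [mul_assoc, e1]
      field_simp
    have hρh : ∀ j : ℕ, lam ^ j = (Mf/B) ^ ((j:ℝ)/β) := by
      intro j
      rw [← Real.rpow_natCast lam j, hlamdef, ← Real.rpow_mul hMfB.le]
      congr 1
      ring
    have hρpos : 0 < (Mf/B) ^ ((h:ℝ)/β) := Real.rpow_pos_of_pos hMfB _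
    have hMfB1 : Mf/B ≤ 1 := le_of_lt ((div_lt_one hBpos).mpr hMB)
    have hρ1 : (Mf/B) ^ ((h:ℝ)/β) ≤ 1 := Real.rpow_le_one hMfB.le hMfB1 hθ0
    have hmono : ∀ j, j ≤ h → (Mf/B) ^ ((h:ℝ)/β) ≤ lam ^ j := by
      intro j hj
      rw [hρh j]
      refine Real.rpow_le_rpow_of_exponent_ge hMfB hMfB1 ?_
      have : (j:ℝ) ≤ (h:ℝ) := Nat.cast_le.mpr hj
      gcongr
    have hmj : ∀ j, j ≤ h → m j ≤ Ck * (2*Mf) / (Mf/B) ^ ((h:ℝ)/β) := by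
      intro j h2
      have hjk : j ≤ k'+1 := le_trans h2 hhk
      have h3 := master j hjk
      rw [hlamβ] at h3
      have h4 : m j * (Mf/B) ^ ((h:ℝ)/β) ≤ Ck * (Mf + Mf) :=
        le_trans (mul_le_mul_of_nonneg_left (hmono j h2) (hmnn j hjk)) h3
      rw [le_div_iff₀ hρpos]
      nlinarith [h4]
    have hsum : ∑ j ∈ Finset.Icc 1 h, ‖iteratedFDeriv ℝ j f x‖
        ≤ (h:ℝ) * (Ck * (2*Mf) / (Mf/B) ^ ((h:ℝ)/β)) := by
      calc ∑ j ∈ Finset.Icc 1 h, ‖iteratedFDeriv ℝ j f x‖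
          ≤ ∑ _j ∈ Finset.Icc 1 h, (Ck * (2*Mf) / (Mf/B) ^ ((h:ℝ)/β)) := by
            refine Finset.sum_le_sum fun j hj => ?_
            obtain ⟨hj1, hj2⟩ := Finset.mem_Icc.mp hj
            exact le_trans (hle j (le_trans hj2 hhk) x) (hmj j hj2)
        _ = (h:ℝ) * (Ck * (2*Mf) / (Mf/B) ^ ((h:ℝ)/β)) := by
            rw [Finset.sum_const, Nat.card_Icc]
            simp [nsmul_eq_mul]
    have hfx : |f x| ≤ Mf / (Mf/B) ^ ((h:ℝ)/β) := by
      refine le_trans (hMf x) ?_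
      rw [le_div_iff₀ hρpos]
      nlinarith [hρ1, hMfpos]
    have hcast : (h:ℝ) ≤ (k':ℝ) + 2 := by
      have : (h:ℕ) ≤ k' + 2 := by omega
      exact_mod_cast this
    have hCkpos : (0:ℝ) < Ck := lt_of_lt_of_le one_pos hCk1
    have htot : |f x| + ∑ j ∈ Finset.Icc 1 h, ‖iteratedFDeriv ℝ j f x‖
        ≤ C * (Mf / (Mf/B) ^ ((h:ℝ)/β)) := by
      have hpos : 0 < Mf / (Mf/B) ^ ((h:ℝ)/β) := div_pos hMfpos hρpos
      have e2 : (h:ℝ) * (Ck * (2*Mf) / (Mf/B) ^ ((h:ℝ)/β))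
          = 2 * (h:ℝ) * Ck * (Mf / (Mf/B) ^ ((h:ℝ)/β)) := by ring
      rw [hCdef]
      have hh0 : (0:ℝ) ≤ (h:ℝ) := Nat.cast_nonneg _
      nlinarith [hsum, hfx, hpos, hCkpos, hcast, hh0,
        mul_le_mul_of_nonneg_right (mul_le_mul_of_nonneg_right hcast hCkpos.le) hpos.le]
    refine htot.trans ?_
    have hfin : Mf / (Mf/B) ^ ((h:ℝ)/β) = B ^ ((h:ℝ)/β) * Mf ^ (1 - (h:ℝ)/β) := by
      rw [Real.div_rpow hMf0 hB0, Real.rpow_sub hMfpos, Real.rpow_one]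
      have hn1 : (Mf:ℝ) ^ ((h:ℝ)/β) ≠ 0 := (Real.rpow_pos_of_pos hMfpos _).ne'
      have hn2 : (B:ℝ) ^ ((h:ℝ)/β) ≠ 0 := (Real.rpow_pos_of_pos hBpos _).ne'
      field_simp
    rw [hfin, ← mul_assoc]
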